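/- The Weyl operators are trace-orthogonal: for all a, b, a', b' : Fin d, the trace of (X^(a:ℕ) * Z^(b:ℕ))ᴴ * (X^(a':ℕ) * Z^(b':ℕ)) equals d if a = a' and b = b', and equals 0 otherwise. -/

import Mathlib

open Matrix Complex
open Fin.NatCast

/-- The primitive `d`-th root of unity `ω = exp(2πi/d)`. -/
noncomputable def omega (d : ℕ) : ℂ := Complex.exp (2 * Real.pi * Complex.I / d)

/-- The generalized Pauli shift matrix `X` on a `d`-dimensional qudit:
`X i j = 1` iff `i = j + 1 (mod d)`. -/
def PauliX (d : ℕ) [NeZero d] : Matrix (Fin d) (Fin d) ℂ :=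
  Matrix.of fun i j => if i = j + 1 then 1 else 0

/-- The generalized Pauli phase matrix `Z = diag(1, ω, ω², …)`. -/
noncomputable def PauliZ (d : ℕ) [NeZero d] : Matrix (Fin d) (Fin d) ℂ :=
  Matrix.diagonal fun j => omega d ^ (j : ℕ)

lemma omega_prim (d : ℕ) [NeZero d] : IsPrimitiveRoot (omega d) d := by
  simpa [omega, mul_comm, mul_assoc, div_eq_mul_inv] using
    Complex.isPrimitiveRoot_exp d (NeZero.ne d)

lemma pauliX_pow (d : ℕ) [NeZero d] (n : ℕ) (i j : Fin d) :
    (PauliX d ^ n) i j = if i = j + (n : Fin d) then 1 else 0 := by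
  induction n generalizing i j with
  | zero => simp [Matrix.one_apply, eq_comm]
  | succ n ih =>
    rw [pow_succ', Matrix.mul_apply]
    rw [Finset.sum_eq_single (j + (n : Fin d))]
    · rw [ih]
      simp [PauliX, add_assoc, Nat.cast_add, Nat.cast_one, add_comm (n:Fin d) 1]
    · intro k _ hk
      rw [ih, if_neg hk, mul_zero]
    · simp

lemma conj_omega (d : ℕ) [NeZero d] : (starRingEnd ℂ) (omega d) = (omega d)⁻¹ := by
  rw [omega, ← Complex.exp_conj, ← Complex.exp_neg]
  congr 1
  have : (d : ℂ) = ((d : ℝ) : ℂ) := by push_cast; ring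
  rw [this]
  simp [map_div₀, Complex.conj_I, map_ofNat]
  ring

theorem weyl_trace_orthogonal (d : ℕ) [NeZero d] (a b a' b' : Fin d) :
    Matrix.trace ((PauliX d ^ (a : ℕ) * PauliZ d ^ (b : ℕ))ᴴ *
        (PauliX d ^ (a' : ℕ) * PauliZ d ^ (b' : ℕ))) =
      if a = a' ∧ b = b' then (d : ℂ) else 0 := by
  have hprim := omega_prim d
  have hZ : ∀ (n : ℕ), PauliZ d ^ n = Matrix.diagonal fun j : Fin d => omega d ^ ((j : ℕ) * n) := by
    intro n
    have hf : ((fun j : Fin d => omega d ^ (j : ℕ)) ^ n) =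
        fun j : Fin d => omega d ^ ((j : ℕ) * n) := by
      funext j; rw [Pi.pow_apply, ← pow_mul]
    rw [PauliZ, Matrix.diagonal_pow, hf]
  have entry : ∀ (p q : Fin d) (i k : Fin d),
      (PauliX d ^ (p : ℕ) * PauliZ d ^ (q : ℕ)) i k =
        if i = k + ((p : ℕ) : Fin d) then omega d ^ ((k : ℕ) * (q : ℕ)) else 0 := by
    intro p q i k
    rw [hZ, Matrix.mul_diagonal, pauliX_pow, ite_mul, one_mul, zero_mul]
  simp only [Matrix.trace, Matrix.diag_apply, Matrix.mul_apply,
    Matrix.conjTranspose_apply, entry, ← starRingEnd_apply, apply_ite (starRingEnd ℂ), map_zero,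
    ite_mul, zero_mul, mul_ite, mul_zero]
  have hsum : ∀ i : Fin d, (∑ k : Fin d,
      if k = i + ((a' : ℕ) : Fin d) then (if k = i + ((a : ℕ) : Fin d) then
        (starRingEnd ℂ) (omega d ^ ((i:ℕ)*(b:ℕ))) * omega d ^ ((i:ℕ)*(b':ℕ)) else 0) else 0) =
      if (a : Fin d) = a' then (starRingEnd ℂ) (omega d ^ ((i:ℕ)*(b:ℕ))) * omega d ^ ((i:ℕ)*(b':ℕ)) else 0 := by
    intro i
    rw [Finset.sum_ite_eq' Finset.univ (i + ((a' : ℕ) : Fin d))]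
    simp [add_right_inj, eq_comm]
  rw [Finset.sum_congr rfl (fun i _ => hsum i)]
  by_cases ha : a = a'
  · subst ha
    by_cases hb : b = b'
    · subst hb
      simp only [if_pos rfl, and_self, if_pos]
      have hω : omega d ≠ 0 := hprim.ne_zero (NeZero.ne d)
      have : ∀ i : Fin d, (starRingEnd ℂ) (omega d ^ ((i:ℕ)*(b:ℕ))) * omega d ^ ((i:ℕ)*(b:ℕ)) = 1 := by
        intro i
        rw [map_pow, conj_omega, inv_pow, inv_mul_cancel₀ (pow_ne_zero _ hω)]
      rw [Finset.sum_congr rfl (fun i _ => this i)]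
      simp
    · simp only [eq_self_iff_true, if_true]
      rw [if_neg (fun h => hb h.2)]
      have hω : omega d ≠ 0 := hprim.ne_zero (NeZero.ne d)
      set m : ℤ := (b' : ℤ) - (b : ℤ) with hm
      have hmne : m ≠ 0 := by
        simp only [hm, sub_ne_zero]
        exact_mod_cast fun h => hb (Fin.ext (by exact_mod_cast h.symm)) 
      set w : ℂ := omega d ^ m with hw
      have hterm : ∀ i : Fin d, (starRingEnd ℂ) (omega d ^ ((i:ℕ)*(b:ℕ))) * omega d ^ ((i:ℕ)*(b':ℕ)) = w ^ (i : ℕ) := by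
        intro i
        rw [map_pow, conj_omega, hw, inv_pow, ← zpow_natCast (omega d) ((i:ℕ)*(b:ℕ)),
          ← _root_.zpow_neg, ← zpow_natCast (omega d) ((i:ℕ)*(b':ℕ)), ← zpow_add₀ hω,
          ← zpow_natCast (omega d ^ m) (i:ℕ), ← _root_.zpow_mul]
        congr 1
        push_cast [hm]
        ring
      rw [Finset.sum_congr rfl (fun i _ => hterm i)]
      have hw1 : w ≠ 1 := by
        intro h
        rw [hw, hprim.zpow_eq_one_iff_dvd] at h
        have h1 : |m| < (d : ℤ) := by
          have hb1 : ((b : ℕ) : ℤ) < d := by exact_mod_cast b.isLt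
          have hb2 : ((b' : ℕ) : ℤ) < d := by exact_mod_cast b'.isLt
          have hb3 : (0:ℤ) ≤ ((b : ℕ) : ℤ) := Int.natCast_nonneg _
          have hb4 : (0:ℤ) ≤ ((b' : ℕ) : ℤ) := Int.natCast_nonneg _
          rw [hm, abs_lt]
          constructor <;> omega
        exact hmne (Int.eq_zero_of_abs_lt_dvd h h1)
      have hwd : w ^ d = 1 := by
        rw [hw, ← zpow_natCast (omega d ^ m) d, ← _root_.zpow_mul, mul_comm,
          _root_.zpow_mul, zpow_natCast, hprim.pow_eq_one, _root_.one_zpow]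
      rw [Fin.sum_univ_eq_sum_range (fun n => w ^ n), geom_sum_eq hw1, hwd, sub_self, zero_div]
  · simp [ha]
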